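/- (Theorem 2) Let B ≥ 2, K ≥ 1, let δ be a real number with 0 < δ ≤ 1, and let R be a positive integer with R ≥ 2 · log(K/√δ) / log B (natural logarithms). If H = (h_1, …, h_R) consists of R independent uniformly random hash functions from Fin K to Fin B, then with probability greater than or equal to 1 − δ, every pair of distinct classes c₁ ≠ c₂ in Fin K is distinguishable under H, i.e., there exists some j ∈ {1, …, R} with h_j(c₁) ≠ h_j(c₂). -/

import Mathlib

lemma card_pair_collide (K B : ℕ) (c₁ c₂ : Fin K) (hne : c₁ ≠ c₂) :
    (Finset.univ.filter (fun h : Fin K → Fin B => h c₁ = h c₂)).card = B ^ (K - 1) := by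
  classical
  have e : {h : Fin K → Fin B // h c₁ = h c₂} ≃ ({a : Fin K // a ≠ c₂} → Fin B) :=
    { toFun := fun h a => h.1 a
      invFun := fun g => ⟨fun a => if ha : a = c₂ then g ⟨c₁, hne⟩ else g ⟨a, ha⟩, by
        simp [hne]⟩
      left_inv := fun h => by
        apply Subtype.ext
        funext a
        by_cases ha : a = c₂
        · subst ha; simpa using h.2
        · simp [ha]
      right_inv := fun g => by
        funext a
        simp [a.2] }
  have h1 : (Finset.univ.filter (fun h : Fin K → Fin B => h c₁ = h c₂)).card
      = Fintype.card {h : Fin K → Fin B // h c₁ = h c₂} := (Fintype.card_subtype _).symm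
  have hc : Fintype.card {a : Fin K // a ≠ c₂} = K - 1 := by
    have := Fintype.card_subtype_compl (fun a : Fin K => a = c₂)
    simpa [Fintype.card_subtype_eq] using this
  rw [h1, Fintype.card_congr e, Fintype.card_fun, hc]
  simp

lemma card_all_collide (K B R : ℕ) (c₁ c₂ : Fin K) (hne : c₁ ≠ c₂) :
    (Finset.univ.filter (fun H : Fin R → Fin K → Fin B => ∀ j, H j c₁ = H j c₂)).card
      = (B ^ (K - 1)) ^ R := by
  classical
  have e : {H : Fin R → Fin K → Fin B // ∀ j, H j c₁ = H j c₂}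
      ≃ (Fin R → {h : Fin K → Fin B // h c₁ = h c₂}) :=
    { toFun := fun H j => ⟨H.1 j, H.2 j⟩
      invFun := fun G => ⟨fun j => (G j).1, fun j => (G j).2⟩
      left_inv := fun H => rfl
      right_inv := fun G => rfl }
  have h1 : (Finset.univ.filter (fun H : Fin R → Fin K → Fin B => ∀ j, H j c₁ = H j c₂)).card
      = Fintype.card {H : Fin R → Fin K → Fin B // ∀ j, H j c₁ = H j c₂} :=
    (Fintype.card_subtype _).symm
  rw [h1, Fintype.card_congr e, Fintype.card_fun, Fintype.card_subtype,
    card_pair_collide K B c₁ c₂ hne]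
  simp

/-- (Theorem 2) Let `B ≥ 2`, `K ≥ 1`, `0 < δ ≤ 1`, and let `R ≥ 1` satisfy
`R ≥ 2·log(K/√δ)/log B` (natural logarithms). If `H = (h_1, …, h_R)` consists
of `R` independent uniformly random hash functions `Fin K → Fin B`, then with
probability at least `1 − δ` every pair of distinct classes `c₁ ≠ c₂` is
distinguishable under `H`, i.e. some `j` has `H j c₁ ≠ H j c₂`. -/
theorem mach_all_pairs_distinguishable
    (K B R : ℕ) (hK : 1 ≤ K) (hB : 2 ≤ B) (hRpos : 0 < R)
    (δ : ℝ) (hδ0 : 0 < δ) (hδ1 : δ ≤ 1)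
    (hR : (R : ℝ) ≥ 2 * Real.log ((K : ℝ) / Real.sqrt δ) / Real.log B) :
    ((Finset.univ.filter
        (fun H : Fin R → (Fin K → Fin B) =>
          ∀ c₁ c₂ : Fin K, c₁ ≠ c₂ → ∃ j : Fin R, H j c₁ ≠ H j c₂)).card : ℝ)
        / (B : ℝ) ^ (K * R)
      ≥ 1 - δ := by
  classical
  set P : (Fin R → Fin K → Fin B) → Prop :=
    fun H => ∀ c₁ c₂ : Fin K, c₁ ≠ c₂ → ∃ j : Fin R, H j c₁ ≠ H j c₂ with hP
  set good := Finset.univ.filter P with hgood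
  set bad := Finset.univ.filter (fun H => ¬ P H) with hbad
  -- split of the total count
  have hsplit : good.card + bad.card = B ^ (K * R) := by
    rw [hgood, hbad, Finset.card_filter_add_card_filter_not, Finset.card_univ]
    simp [pow_mul]
  -- union bound on the bad set
  have hbadle : bad.card ≤ K ^ 2 * (B ^ (K - 1)) ^ R := by
    have hsub : bad ⊆ (Finset.univ : Finset (Fin K × Fin K)).biUnion
        (fun p => Finset.univ.filter
          (fun H : Fin R → Fin K → Fin B => p.1 ≠ p.2 ∧ ∀ j, H j p.1 = H j p.2)) := by
      intro H hH
      simp only [hbad, hP, Finset.mem_filter, Finset.mem_univ, true_and] at hH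
      push_neg at hH
      obtain ⟨c₁, c₂, hne, hall⟩ := hH
      simp only [Finset.mem_biUnion, Finset.mem_univ, Finset.mem_filter, true_and]
      exact ⟨(c₁, c₂), hne, hall⟩
    calc bad.card ≤ _ := Finset.card_le_card hsub
      _ ≤ ∑ p : Fin K × Fin K, (Finset.univ.filter
            (fun H : Fin R → Fin K → Fin B => p.1 ≠ p.2 ∧ ∀ j, H j p.1 = H j p.2)).card :=
          Finset.card_biUnion_le
      _ ≤ ∑ _p : Fin K × Fin K, (B ^ (K - 1)) ^ R := by
          apply Finset.sum_le_sum
          intro p _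
          by_cases hpq : p.1 = p.2
          · simp [hpq]
          · have : (Finset.univ.filter
                (fun H : Fin R → Fin K → Fin B => p.1 ≠ p.2 ∧ ∀ j, H j p.1 = H j p.2))
                = Finset.univ.filter (fun H : Fin R → Fin K → Fin B => ∀ j, H j p.1 = H j p.2) := by
              apply Finset.filter_congr
              intro H _
              simp [hpq]
            rw [this, card_all_collide K B R p.1 p.2 hpq]
      _ = K ^ 2 * (B ^ (K - 1)) ^ R := by
          simp [Finset.sum_const, Finset.card_univ, sq, mul_assoc]
  -- analytic facts
  have hB1 : (1 : ℝ) < B := by exact_mod_cast lt_of_lt_of_le one_lt_two (by exact_mod_cast hB)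
  have hB0 : (0 : ℝ) < B := lt_trans one_pos hB1
  have hlogB : 0 < Real.log B := Real.log_pos hB1
  have hsq : 0 < Real.sqrt δ := Real.sqrt_pos.mpr hδ0
  have hKpos : (0 : ℝ) < K := by exact_mod_cast hK
  have hx : (0 : ℝ) < (K : ℝ) / Real.sqrt δ := div_pos hKpos hsq
  have h1 : 2 * Real.log ((K : ℝ) / Real.sqrt δ) ≤ R * Real.log B := by
    rw [ge_iff_le, div_le_iff₀ hlogB] at hR
    linarith
  have hxsq : ((K : ℝ) / Real.sqrt δ) ^ 2 = (K : ℝ) ^ 2 / δ := by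
    rw [div_pow, Real.sq_sqrt hδ0.le]
  have h2 : Real.log ((K : ℝ) ^ 2 / δ) ≤ Real.log ((B : ℝ) ^ R) := by
    rw [Real.log_pow, ← hxsq, Real.log_pow]
    push_cast
    linarith
  have h3 : (K : ℝ) ^ 2 / δ ≤ (B : ℝ) ^ R := by
    have h4 : (0 : ℝ) < (K : ℝ) ^ 2 / δ := div_pos (pow_pos hKpos 2) hδ0
    exact (Real.log_le_log_iff h4 (pow_pos hB0 R)).mp h2
  have hK2 : (K : ℝ) ^ 2 ≤ δ * (B : ℝ) ^ R := by
    rw [div_le_iff₀ hδ0] at h3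
    linarith
  -- assemble
  have hKR : K * R = (K - 1) * R + R := by
    have hKs : K - 1 + 1 = K := Nat.succ_pred_eq_of_pos hK
    calc K * R = (K - 1 + 1) * R := by rw [hKs]
      _ = (K - 1) * R + R := by ring
  have hTpos : (0 : ℝ) < (B : ℝ) ^ (K * R) := pow_pos hB0 _
  rw [ge_iff_le, le_div_iff₀ hTpos]
  have hgoodR : (good.card : ℝ) = (B : ℝ) ^ (K * R) - bad.card := by
    have := congrArg (fun n : ℕ => (n : ℝ)) hsplit
    push_cast at this
    linarith
  have hbadR : (bad.card : ℝ) ≤ (K : ℝ) ^ 2 * (B : ℝ) ^ ((K - 1) * R) := by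
    have := (Nat.cast_le (α := ℝ)).mpr hbadle
    push_cast at this
    rwa [← pow_mul] at this
  have hT : (B : ℝ) ^ (K * R) = (B : ℝ) ^ ((K - 1) * R) * (B : ℝ) ^ R := by
    rw [hKR, pow_add]
  have hXpos : (0 : ℝ) < (B : ℝ) ^ ((K - 1) * R) := pow_pos hB0 _
  have hfin : (bad.card : ℝ) ≤ δ * (B : ℝ) ^ (K * R) := by
    calc (bad.card : ℝ) ≤ (K : ℝ) ^ 2 * (B : ℝ) ^ ((K - 1) * R) := hbadR
      _ ≤ (δ * (B : ℝ) ^ R) * (B : ℝ) ^ ((K - 1) * R) :=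
          mul_le_mul_of_nonneg_right hK2 hXpos.le
      _ = δ * (B : ℝ) ^ (K * R) := by rw [hT]; ring
  rw [hgoodR]
  linarith
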